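/- Let p ≥ 1 and n ≥ 1 be integers, let a, b be reals with p/2 + a + 1 > 0 and b > -1, let γ be a real with 0 ≤ γ < p/2 + a + 1, and let π(g) = (g+1)^{-(a+2)}(g/(g+1))^b. Then there exists a constant q₄ > 0, independent of i, w and s, such that for every integer i ≥ 1, every w > 0 and every s > 0: ∫_0^∞∫_0^∞ F(g,η;w,s) h_i(η)² (g+1)^γ π(g) dg dη ≤ q₄ · (w+1)^γ · ∫_0^∞∫_0^∞ F(g,η;w,s) h_i(η)² π(g) dg dη. -/

import Mathlib

open MeasureTheory Real Set

/-- The kernel `F(g,η;w,s)`. -/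
noncomputable def Fker (p n : ℕ) (g η w s : ℝ) : ℝ :=
  η ^ ((p : ℝ) / 2 + (n : ℝ) / 2) * (g + 1) ^ (-(p : ℝ) / 2) *
    Real.exp (-(η * s / 2) * (w / (g + 1) + 1))

/-- The sequence `h_i(η) = i/(i + |log η|)`. -/
noncomputable def hfun (i : ℕ) (η : ℝ) : ℝ :=
  (i : ℝ) / ((i : ℝ) + |Real.log η|)

/-- The prior `π(g) = (g+1)^{-(a+2)} (g/(g+1))^b`. -/
noncomputable def priorPi (a b g : ℝ) : ℝ :=
  (g + 1) ^ (-(a + 2)) * (g / (g + 1)) ^ b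

lemma hfun_nonneg (i : ℕ) (η : ℝ) : 0 ≤ hfun i η := by
  unfold hfun
  positivity

lemma hfun_le_one (i : ℕ) (η : ℝ) : hfun i η ≤ 1 := by
  unfold hfun
  rcases Nat.eq_zero_or_pos i with h | h
  · simp [h]
  · have hi : (0:ℝ) < i := by exact_mod_cast h
    rw [div_le_one (by positivity)]
    nlinarith [abs_nonneg (Real.log η)]

lemma measurable_hfun (i : ℕ) : Measurable (hfun i) :=
  measurable_const.div ((measurable_const.add (measurable_abs.comp Real.measurable_log)))

lemma hfun_double (i : ℕ) (hi : 1 ≤ i) (η : ℝ) (hη : 0 < η) :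
    hfun i (2 * η) ≤ (1 + Real.log 2) * hfun i η := by
  have hi1 : (1:ℝ) ≤ i := by exact_mod_cast hi
  have hlog2 : (0:ℝ) < Real.log 2 := Real.log_pos (by norm_num)
  have hl : Real.log (2 * η) = Real.log 2 + Real.log η :=
    Real.log_mul (by norm_num) hη.ne'
  have habs : |Real.log η| ≤ Real.log 2 + |Real.log (2 * η)| := by
    rw [hl]
    have := abs_sub_abs_le_abs_sub (Real.log 2 + Real.log η) (Real.log 2)
    have h2 : |Real.log 2| = Real.log 2 := abs_of_pos hlog2
    calc |Real.log η| = |Real.log 2 + Real.log η - Real.log 2| := by ring_nf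
      _ ≤ |Real.log 2 + Real.log η| + |Real.log 2| := abs_sub (Real.log 2 + Real.log η) (Real.log 2)
      _ = Real.log 2 + |Real.log 2 + Real.log η| := by rw [h2]; ring
  have hd1 : (0:ℝ) < (i:ℝ) + |Real.log (2*η)| := by positivity
  have hd2 : (0:ℝ) < (i:ℝ) + |Real.log η| := by positivity
  unfold hfun
  rw [mul_div_assoc' (1 + Real.log 2) _ _, div_le_div_iff₀ hd1 hd2]
  have key : (i:ℝ) + |Real.log η| ≤ (1 + Real.log 2) * ((i:ℝ) + |Real.log (2*η)|) := by
    nlinarith [abs_nonneg (Real.log (2*η))]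
  nlinarith [mul_le_mul_of_nonneg_left key (by positivity : (0:ℝ) ≤ (i:ℝ))]

noncomputable def Eint (m t : ℝ) (i : ℕ) : ℝ :=
  ∫ η in Ioi (0:ℝ), η ^ m * Real.exp (-(t * η)) * (hfun i η) ^ 2

lemma integrableOn_base (m t : ℝ) (hm : -1 < m) (ht : 0 < t) :
    IntegrableOn (fun η : ℝ => η ^ m * Real.exp (-(t * η))) (Ioi 0) := by
  have h := integrableOn_rpow_mul_exp_neg_mul_rpow hm (zero_lt_one (α := ℝ)) ht
  simpa [Real.rpow_one, neg_mul] using h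

lemma measurable_Eint_integrand (m t : ℝ) (i : ℕ) :
    Measurable (fun η : ℝ => η ^ m * Real.exp (-(t * η)) * (hfun i η) ^ 2) := by
  have hfm := measurable_hfun i
  fun_prop

lemma integrableOn_Eint (m t : ℝ) (hm : -1 < m) (ht : 0 < t) (i : ℕ) :
    IntegrableOn (fun η : ℝ => η ^ m * Real.exp (-(t * η)) * (hfun i η) ^ 2) (Ioi 0) := by
  refine (integrableOn_base m t hm ht).mono' ((measurable_Eint_integrand m t i).aestronglyMeasurable) ?_
  rw [ae_restrict_iff' measurableSet_Ioi]
  filter_upwards with η hη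
  have h1 : (0:ℝ) ≤ η ^ m := Real.rpow_nonneg hη.le m
  have h2 : (0:ℝ) < Real.exp (-(t * η)) := Real.exp_pos _
  have h3 : (hfun i η) ^ 2 ≤ 1 := by
    have := hfun_nonneg i η
    have := hfun_le_one i η
    nlinarith
  rw [Real.norm_eq_abs, abs_of_nonneg (by positivity)]
  exact mul_le_of_le_one_right (mul_nonneg h1 h2.le) h3

lemma Eint_nonneg (m t : ℝ) (i : ℕ) : 0 ≤ Eint m t i := by
  apply setIntegral_nonneg measurableSet_Ioi
  intro η hη
  have h1 : (0:ℝ) ≤ η ^ m := Real.rpow_nonneg (le_of_lt hη) m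
  positivity

lemma Eint_anti (m : ℝ) (hm : -1 < m) {t1 t2 : ℝ} (ht1 : 0 < t1) (h12 : t1 ≤ t2) (i : ℕ) :
    Eint m t2 i ≤ Eint m t1 i := by
  apply setIntegral_mono_on (integrableOn_Eint m t2 hm (lt_of_lt_of_le ht1 h12) i)
    (integrableOn_Eint m t1 hm ht1 i) measurableSet_Ioi
  intro η hη
  have h1 : (0:ℝ) ≤ η ^ m := Real.rpow_nonneg (le_of_lt hη) m
  have h2 : Real.exp (-(t2 * η)) ≤ Real.exp (-(t1 * η)) := by
    apply Real.exp_le_exp.mpr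
    have : t1 * η ≤ t2 * η := mul_le_mul_of_nonneg_right h12 hη.le
    linarith
  have h3 : (0:ℝ) ≤ (hfun i η) ^ 2 := sq_nonneg _
  exact mul_le_mul_of_nonneg_right (mul_le_mul_of_nonneg_left h2 h1) h3

lemma Eint_double (m t : ℝ) (hm : -1 < m) (ht : 0 < t) (i : ℕ) (hi : 1 ≤ i) :
    Eint m (t / 2) i ≤ 2 ^ (m + 1) * (1 + Real.log 2) ^ 2 * Eint m t i := by
  have hsub := integral_comp_mul_left_Ioi
    (fun x : ℝ => x ^ m * Real.exp (-(t / 2 * x)) * (hfun i x) ^ 2) 0 (two_pos (α := ℝ))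
  simp only [mul_zero, smul_eq_mul] at hsub
  have hE : Eint m (t / 2) i =
      2 * ∫ u in Ioi (0:ℝ), (2 * u) ^ m * Real.exp (-(t / 2 * (2 * u))) * (hfun i (2 * u)) ^ 2 := by
    unfold Eint
    rw [hsub]
    ring
  rw [hE]
  have hkey : (∫ u in Ioi (0:ℝ), (2 * u) ^ m * Real.exp (-(t / 2 * (2 * u))) * (hfun i (2 * u)) ^ 2)
      ≤ (2 ^ m * (1 + Real.log 2) ^ 2) * Eint m t i := by
    unfold Eint
    rw [← integral_const_mul]
    apply setIntegral_mono_on ?_ ?_ measurableSet_Ioi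
    · intro u hu
      have hu0 : (0:ℝ) < u := hu
      have e1 : (2 * u) ^ m = 2 ^ m * u ^ m := Real.mul_rpow (by norm_num) hu0.le
      have e2 : Real.exp (-(t / 2 * (2 * u))) = Real.exp (-(t * u)) := by ring_nf
      have e3 : (hfun i (2 * u)) ^ 2 ≤ (1 + Real.log 2) ^ 2 * (hfun i u) ^ 2 := by
        have hd := hfun_double i hi u hu0
        have h0 := hfun_nonneg i (2 * u)
        have h0' := hfun_nonneg i u
        have hlog2 : (0:ℝ) < Real.log 2 := Real.log_pos (by norm_num)
        nlinarith
      rw [e1, e2]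
      have hb : (0:ℝ) ≤ 2 ^ m * u ^ m * Real.exp (-(t * u)) := by
        have : (0:ℝ) ≤ u ^ m := Real.rpow_nonneg hu0.le m
        positivity
      calc 2 ^ m * u ^ m * Real.exp (-(t * u)) * (hfun i (2 * u)) ^ 2
          ≤ 2 ^ m * u ^ m * Real.exp (-(t * u)) * ((1 + Real.log 2) ^ 2 * (hfun i u) ^ 2) :=
            mul_le_mul_of_nonneg_left e3 hb
        _ = 2 ^ m * (1 + Real.log 2) ^ 2 * (u ^ m * Real.exp (-(t * u)) * (hfun i u) ^ 2) := by ring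
    · -- integrability of LHS integrand
      apply Integrable.mono' (g := fun u : ℝ => 2 ^ m * (u ^ m * Real.exp (-(t * u))))
        ((integrableOn_base m t hm ht).const_mul _)
        (Measurable.aestronglyMeasurable (by
          have hfm := measurable_hfun i
          fun_prop))
      rw [ae_restrict_iff' measurableSet_Ioi]
      filter_upwards with u hu
      have hu0 : (0:ℝ) < u := hu
      have e1 : (2 * u) ^ m = 2 ^ m * u ^ m := Real.mul_rpow (by norm_num) hu0.le
      have e2 : Real.exp (-(t / 2 * (2 * u))) = Real.exp (-(t * u)) := by ring_nf
      have h3 : (hfun i (2*u)) ^ 2 ≤ 1 := by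
        have := hfun_nonneg i (2*u); have := hfun_le_one i (2*u); nlinarith
      have hum : (0:ℝ) ≤ u ^ m := Real.rpow_nonneg hu0.le m
      rw [Real.norm_eq_abs, e1, e2, abs_of_nonneg (by positivity)]
      calc 2 ^ m * u ^ m * Real.exp (-(t * u)) * (hfun i (2*u)) ^ 2
          ≤ 2 ^ m * u ^ m * Real.exp (-(t * u)) :=
            mul_le_of_le_one_right (by positivity) h3
        _ = 2 ^ m * (u ^ m * Real.exp (-(t * u))) := by ring
    · exact (integrableOn_Eint m t hm ht i).const_mul _
  calc 2 * ∫ u in Ioi (0:ℝ), (2 * u) ^ m * Real.exp (-(t / 2 * (2 * u))) * (hfun i (2 * u)) ^ 2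
      ≤ 2 * ((2 ^ m * (1 + Real.log 2) ^ 2) * Eint m t i) := by linarith
    _ = 2 ^ (m + 1) * (1 + Real.log 2) ^ 2 * Eint m t i := by
        rw [Real.rpow_add two_pos, Real.rpow_one]; ring

lemma measurable_priorPi (a b : ℝ) : Measurable (fun g => priorPi a b g) := by
  unfold priorPi; fun_prop

lemma priorPi_nonneg (a b g : ℝ) (hg : 0 < g) : 0 ≤ priorPi a b g := by
  unfold priorPi
  have h1 : (0:ℝ) ≤ g + 1 := by linarith
  have h2 : (0:ℝ) ≤ g / (g + 1) := div_nonneg hg.le h1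
  exact mul_nonneg (Real.rpow_nonneg h1 _) (Real.rpow_nonneg h2 _)

lemma measurable_EE (m w s : ℝ) (i : ℕ) :
    Measurable (fun g : ℝ => Eint m (s / 2 * (w / (g + 1) + 1)) i) := by
  have hfm := measurable_hfun i
  have h : StronglyMeasurable (Function.uncurry (fun g η : ℝ =>
      η ^ m * Real.exp (-(s / 2 * (w / (g + 1) + 1) * η)) * (hfun i η) ^ 2)) := by
    apply Measurable.stronglyMeasurable
    unfold Function.uncurry
    fun_prop
  unfold Eint
  exact h.integral_prod_right.measurable

lemma inner_eq2 (p n i : ℕ) (w s A B g : ℝ) :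
    (∫ η in Ioi (0:ℝ), Fker p n g η w s * hfun i η ^ 2 * A * B)
      = ((g + 1) ^ (-(p : ℝ) / 2) * (A * B)) *
        Eint ((p : ℝ) / 2 + (n : ℝ) / 2) (s / 2 * (w / (g + 1) + 1)) i := by
  unfold Eint
  rw [← integral_const_mul]
  apply setIntegral_congr_fun measurableSet_Ioi
  intro η hη
  unfold Fker
  beta_reduce
  rw [show -(η * s / 2) * (w / (g + 1) + 1) = -(s / 2 * (w / (g + 1) + 1) * η) from by ring]
  ring

lemma inner_eq1 (p n i : ℕ) (w s A g : ℝ) :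
    (∫ η in Ioi (0:ℝ), Fker p n g η w s * hfun i η ^ 2 * A)
      = ((g + 1) ^ (-(p : ℝ) / 2) * A) *
        Eint ((p : ℝ) / 2 + (n : ℝ) / 2) (s / 2 * (w / (g + 1) + 1)) i := by
  unfold Eint
  rw [← integral_const_mul]
  apply setIntegral_congr_fun measurableSet_Ioi
  intro η hη
  unfold Fker
  beta_reduce
  rw [show -(η * s / 2) * (w / (g + 1) + 1) = -(s / 2 * (w / (g + 1) + 1) * η) from by ring]
  ring

lemma small_base (e x : ℝ) (hx1 : 1 ≤ x) (hx2 : x ≤ 2) : x ^ e ≤ 2 ^ |e| := by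
  have h01 : (1:ℝ) ≤ 2 ^ |e| := by
    have := Real.rpow_le_rpow_of_exponent_le (one_le_two) (abs_nonneg e)
    rwa [Real.rpow_zero] at this
  rcases le_or_gt 0 e with he | he
  · calc x ^ e ≤ 2 ^ e := Real.rpow_le_rpow (by linarith) hx2 he
      _ ≤ 2 ^ |e| := Real.rpow_le_rpow_of_exponent_le one_le_two (le_abs_self e)
  · calc x ^ e ≤ 1 := Real.rpow_le_one_of_one_le_of_nonpos hx1 (by linarith : e ≤ 0)
      _ ≤ 2 ^ |e| := h01

lemma ratio_le (b g : ℝ) (hg : 1 ≤ g) : (g / (g + 1)) ^ b ≤ 2 ^ |b| := by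
  have hg0 : (0:ℝ) < g := by linarith
  have hx0 : (0:ℝ) < g / (g + 1) := div_pos hg0 (by linarith)
  have hx1 : g / (g + 1) ≤ 1 := by
    rw [div_le_one (by linarith)]; linarith
  have hx2 : (1:ℝ) / 2 ≤ g / (g + 1) := by
    rw [div_le_div_iff₀ (by norm_num) (by linarith)]; linarith
  have h01 : (1:ℝ) ≤ 2 ^ |b| := by
    have := Real.rpow_le_rpow_of_exponent_le (one_le_two) (abs_nonneg b)
    rwa [Real.rpow_zero] at this
  rcases le_or_gt 0 b with hb | hb
  · calc (g / (g + 1)) ^ b ≤ 1 := Real.rpow_le_one hx0.le hx1 hb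
      _ ≤ 2 ^ |b| := h01
  · calc (g / (g + 1)) ^ b ≤ ((1:ℝ)/2) ^ b :=
        Real.rpow_le_rpow_of_nonpos (by norm_num) hx2 hb.le
      _ = 2 ^ |b| := by
        rw [one_div, Real.inv_rpow (by norm_num), ← Real.rpow_neg (by norm_num),
          abs_of_neg hb]

lemma ratio_ge (b g : ℝ) (hg : 1 ≤ g) : 2 ^ (-|b|) ≤ (g / (g + 1)) ^ b := by
  have hg0 : (0:ℝ) < g := by linarith
  have hx0 : (0:ℝ) < g / (g + 1) := div_pos hg0 (by linarith)
  have hx1 : g / (g + 1) ≤ 1 := by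
    rw [div_le_one (by linarith)]; linarith
  have hx2 : (1:ℝ) / 2 ≤ g / (g + 1) := by
    rw [div_le_div_iff₀ (by norm_num) (by linarith)]; linarith
  rcases le_or_gt 0 b with hb | hb
  · have h1 : (2:ℝ) ^ (-|b|) = ((1:ℝ)/2) ^ b := by
      rw [one_div, Real.inv_rpow (by norm_num), ← Real.rpow_neg (by norm_num),
        abs_of_nonneg hb]
    rw [h1]
    exact Real.rpow_le_rpow (by norm_num) hx2 hb
  · have h1 : (2:ℝ) ^ (-|b|) ≤ 1 := by
      apply Real.rpow_le_one_of_one_le_of_nonpos one_le_two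
      simp [abs_nonneg b]
    have h2 : (1:ℝ) ≤ (g / (g + 1)) ^ b :=
      Real.one_le_rpow_of_pos_of_le_one_of_nonpos hx0 hx1 hb.le
    linarith

lemma ratio_le_small (b g : ℝ) (hg0 : 0 < g) (hg1 : g ≤ 1) :
    (g / (g + 1)) ^ b ≤ 2 ^ |b| * g ^ b := by
  have h1 : (0:ℝ) < g + 1 := by linarith
  rw [Real.div_rpow hg0.le h1.le, div_eq_mul_inv, ← Real.rpow_neg h1.le]
  have h2 : (g + 1) ^ (-b) ≤ 2 ^ |b| := by
    have := small_base (-b) (g + 1) (by linarith) (by linarith)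
    rwa [abs_neg] at this
  calc g ^ b * (g + 1) ^ (-b) ≤ g ^ b * 2 ^ |b| :=
      mul_le_mul_of_nonneg_left h2 (Real.rpow_nonneg hg0.le b)
    _ = 2 ^ |b| * g ^ b := mul_comm _ _

lemma intG (e β : ℝ) (he : e < -1) (hβ : -1 < β) :
    IntegrableOn (fun g : ℝ => (g + 1) ^ e * (g / (g + 1)) ^ β) (Ioi 0) := by
  have hmeas : Measurable (fun g : ℝ => (g + 1) ^ e * (g / (g + 1)) ^ β) := by fun_prop
  have h1 : IntegrableOn (fun g : ℝ => (g + 1) ^ e * (g / (g + 1)) ^ β) (Ioc 0 1) := by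
    have hdom : IntegrableOn (fun g : ℝ => 2 ^ |β| * g ^ β) (Ioc 0 1) := by
      have := (intervalIntegrable_iff.mp (intervalIntegral.intervalIntegrable_rpow' hβ (a := 0) (b := 1)))
      rw [uIoc_of_le (by norm_num : (0:ℝ) ≤ 1)] at this
      exact this.const_mul _
    apply hdom.mono' hmeas.aestronglyMeasurable
    rw [ae_restrict_iff' measurableSet_Ioc]
    filter_upwards with g hg
    obtain ⟨hg0, hg1⟩ := hg
    have hr0 : (0:ℝ) ≤ g / (g + 1) := div_nonneg hg0.le (by linarith)
    have hA : (g + 1) ^ e ≤ 1 := Real.rpow_le_one_of_one_le_of_nonpos (by linarith) (by linarith : e ≤ 0)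
    rw [Real.norm_eq_abs, abs_of_nonneg
      (mul_nonneg (Real.rpow_nonneg (by linarith) _) (Real.rpow_nonneg hr0 _))]
    calc (g + 1) ^ e * (g / (g + 1)) ^ β ≤ 1 * (g / (g + 1)) ^ β :=
        mul_le_mul_of_nonneg_right hA (Real.rpow_nonneg hr0 _)
      _ = (g / (g + 1)) ^ β := one_mul _
      _ ≤ 2 ^ |β| * g ^ β := ratio_le_small β g hg0 hg1
  have h2 : IntegrableOn (fun g : ℝ => (g + 1) ^ e * (g / (g + 1)) ^ β) (Ioi 1) := by
    have hdom : IntegrableOn (fun g : ℝ => 2 ^ |β| * g ^ e) (Ioi 1) :=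
      (integrableOn_Ioi_rpow_of_lt he one_pos).const_mul _
    apply hdom.mono' hmeas.aestronglyMeasurable
    rw [ae_restrict_iff' measurableSet_Ioi]
    filter_upwards with g hg
    have hg1 : (1:ℝ) ≤ g := le_of_lt hg
    have hg0 : (0:ℝ) < g := by linarith
    have hr0 : (0:ℝ) ≤ g / (g + 1) := div_nonneg hg0.le (by linarith)
    have hA : (g + 1) ^ e ≤ g ^ e :=
      Real.rpow_le_rpow_of_nonpos hg0 (by linarith) (by linarith : e ≤ 0)
    rw [Real.norm_eq_abs, abs_of_nonneg
      (mul_nonneg (Real.rpow_nonneg (by linarith) _) (Real.rpow_nonneg hr0 _))]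
    calc (g + 1) ^ e * (g / (g + 1)) ^ β ≤ g ^ e * (2 ^ |β|) :=
        mul_le_mul hA (ratio_le β g hg1) (Real.rpow_nonneg hr0 _) (Real.rpow_nonneg hg0.le _)
      _ = 2 ^ |β| * g ^ e := mul_comm _ _
  have : Ioc (0:ℝ) 1 ∪ Ioi 1 = Ioi 0 := Ioc_union_Ioi_eq_Ioi zero_le_one
  rw [← this]
  exact h1.union h2


lemma key_alg (x1 x2 x3 x4 x5 x6 x7 d1 d2 : ℝ) (h1 : d1 ≠ 0) (h2 : d2 ≠ 0) (h3 : x3 ≠ 0) :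
    x2 * (x1 * x4) * (x7 * x6) * x5 / d1
      = x1 * x2 * x7 * d2 / d1 / x3 * x6 * (x3 * x4 * (x5 / d2)) := by
  field_simp

set_option maxHeartbeats 2000000 in
/-- Uniform ratio bound (Part 3 of Lemma B.5 of the paper). -/
theorem ratio_bound (p n : ℕ) (hp : 1 ≤ p) (hn : 1 ≤ n)
    (a b : ℝ) (hpa : (p : ℝ) / 2 + a + 1 > 0) (hb : -1 < b)
    (γ : ℝ) (hγ0 : 0 ≤ γ) (hγ1 : γ < (p : ℝ) / 2 + a + 1) :
    ∃ q4 : ℝ, 0 < q4 ∧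
      ∀ (i : ℕ), 1 ≤ i → ∀ (w s : ℝ), 0 < w → 0 < s →
        (∫ g in Ioi (0 : ℝ), ∫ η in Ioi (0 : ℝ),
            Fker p n g η w s * (hfun i η) ^ 2 * (g + 1) ^ γ * priorPi a b g)
          ≤ q4 * (w + 1) ^ γ *
            ∫ g in Ioi (0 : ℝ), ∫ η in Ioi (0 : ℝ),
              Fker p n g η w s * (hfun i η) ^ 2 * priorPi a b g := by
  have hp1 : (1:ℝ) ≤ (p:ℝ) := by exact_mod_cast hp
  have hn1 : (1:ℝ) ≤ (n:ℝ) := by exact_mod_cast hn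
  have hm : (-1:ℝ) < ((p : ℝ) / 2 + (n : ℝ) / 2) := by linarith
  have hc1 : (1:ℝ) < ((p : ℝ) / 2 + a + 2) := by linarith
  have hγc : γ + 1 < ((p : ℝ) / 2 + a + 2) := by linarith
  have hlog2 : (0:ℝ) < Real.log 2 := Real.log_pos (by norm_num)
  have hK0 : (0:ℝ) < (2 ^ (((p : ℝ) / 2 + (n : ℝ) / 2) + 1) * (1 + Real.log 2) ^ 2) :=
    mul_pos (Real.rpow_pos_of_pos two_pos _) (pow_pos (by linarith) 2)
  have hcU0 : (0:ℝ) < ((2:ℝ) ^ |b|) := Real.rpow_pos_of_pos two_pos _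
  have hcL0 : (0:ℝ) < ((2:ℝ) ^ (-|b|) * (2:ℝ) ^ (-((p : ℝ) / 2 + a + 2))) :=
    mul_pos (Real.rpow_pos_of_pos two_pos _) (Real.rpow_pos_of_pos two_pos _)
  have hD0 : (0:ℝ) < ((2 ^ (((p : ℝ) / 2 + (n : ℝ) / 2) + 1) * (1 + Real.log 2) ^ 2) * ((2:ℝ) ^ |b|) * 2 ^ γ * (((p : ℝ) / 2 + a + 2) - 1) / (((p : ℝ) / 2 + a + 2) - γ - 1) / ((2:ℝ) ^ (-|b|) * (2:ℝ) ^ (-((p : ℝ) / 2 + a + 2)))) := by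
    apply div_pos (div_pos ?_ (by linarith)) hcL0
    have h2γ : (0:ℝ) < 2 ^ γ := Real.rpow_pos_of_pos two_pos _
    exact mul_pos (mul_pos (mul_pos hK0 hcU0) h2γ) (by linarith)
  have h2γ0 : (0:ℝ) < (2:ℝ) ^ γ := Real.rpow_pos_of_pos two_pos _
  refine ⟨2 ^ γ + ((2 ^ (((p : ℝ) / 2 + (n : ℝ) / 2) + 1) * (1 + Real.log 2) ^ 2) * ((2:ℝ) ^ |b|) * 2 ^ γ * (((p : ℝ) / 2 + a + 2) - 1) / (((p : ℝ) / 2 + a + 2) - γ - 1) / ((2:ℝ) ^ (-|b|) * (2:ℝ) ^ (-((p : ℝ) / 2 + a + 2)))), by linarith, ?_⟩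
  intro i hi w s hw hs
  have hR0 : (0:ℝ) < 2 * w + 1 := by linarith
  have hR1 : (1:ℝ) < 2 * w + 1 := by linarith
  have hsub1 : Ioc (0:ℝ) (2 * w + 1) ⊆ Ioi 0 := Ioc_subset_Ioi_self
  have hsub2 : Ioi (2 * w + 1) ⊆ Ioi (0:ℝ) := Ioi_subset_Ioi (by linarith)
  -- basic `Eint` facts
  have hE10 : (0:ℝ) ≤ (Eint ((p : ℝ) / 2 + (n : ℝ) / 2) s i) := Eint_nonneg _ _ _
  have hE20 : (0:ℝ) ≤ (Eint ((p : ℝ) / 2 + (n : ℝ) / 2) (s / 2) i) := Eint_nonneg _ _ _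
  have hE2K : (Eint ((p : ℝ) / 2 + (n : ℝ) / 2) (s / 2) i) ≤ (2 ^ (((p : ℝ) / 2 + (n : ℝ) / 2) + 1) * (1 + Real.log 2) ^ 2) * (Eint ((p : ℝ) / 2 + (n : ℝ) / 2) s i) := Eint_double ((p : ℝ) / 2 + (n : ℝ) / 2) s hm hs i hi
  have hE0g : ∀ g : ℝ, 0 ≤ Eint ((p : ℝ) / 2 + (n : ℝ) / 2) (s / 2 * (w / (g + 1) + 1)) i := fun g => Eint_nonneg _ _ _
  have hEub : ∀ g : ℝ, 0 < g → Eint ((p : ℝ) / 2 + (n : ℝ) / 2) (s / 2 * (w / (g + 1) + 1)) i ≤ (Eint ((p : ℝ) / 2 + (n : ℝ) / 2) (s / 2) i) := by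
    intro g hg
    apply Eint_anti ((p : ℝ) / 2 + (n : ℝ) / 2) hm (half_pos hs) ?_ i
    have hq : (0:ℝ) ≤ w / (g + 1) := div_nonneg hw.le (by linarith)
    exact le_mul_of_one_le_right (half_pos hs).le (by linarith)
  have hElb : ∀ g : ℝ, 2 * w + 1 < g → (Eint ((p : ℝ) / 2 + (n : ℝ) / 2) s i) ≤ Eint ((p : ℝ) / 2 + (n : ℝ) / 2) (s / 2 * (w / (g + 1) + 1)) i := by
    intro g hg
    have hg0 : (0:ℝ) < g := by linarith
    have hq : (0:ℝ) ≤ w / (g + 1) := div_nonneg hw.le (by linarith)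
    have hq1 : w / (g + 1) ≤ 1 := by
      rw [div_le_one (by linarith)]; linarith
    apply Eint_anti ((p : ℝ) / 2 + (n : ℝ) / 2) hm ?_ ?_ i
    · exact mul_pos (half_pos hs) (by linarith)
    · calc s / 2 * (w / (g + 1) + 1) ≤ s / 2 * 2 :=
        mul_le_mul_of_nonneg_left (by linarith) (half_pos hs).le
      _ = s := by ring
  -- weight algebra
  have hmerge1 : ∀ g : ℝ, 0 < g →
      ((g + 1) ^ (-(p : ℝ) / 2) * ((g + 1) ^ γ * priorPi a b g))
        = (g + 1) ^ (γ - ((p : ℝ) / 2 + a + 2)) * (g / (g + 1)) ^ b := by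
    intro g hg
    have h1 : (0:ℝ) < g + 1 := by linarith
    unfold priorPi
    have e1 : ((g+1:ℝ) ^ (-(p:ℝ)/2) * (g+1) ^ γ) * (g+1) ^ (-(a+2))
        = (g+1) ^ (γ - ((p : ℝ) / 2 + a + 2)) := by
      rw [← Real.rpow_add h1, ← Real.rpow_add h1,
        show -(p:ℝ)/2 + γ + -(a+2) = γ - ((p : ℝ) / 2 + a + 2) from by ring]
    calc (g + 1) ^ (-(p : ℝ) / 2) * ((g + 1) ^ γ * ((g+1) ^ (-(a+2)) * (g/(g+1)) ^ b))
        = (((g+1:ℝ) ^ (-(p:ℝ)/2) * (g+1) ^ γ) * (g+1) ^ (-(a+2))) * (g/(g+1)) ^ b := by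
          ring
      _ = (g + 1) ^ (γ - ((p : ℝ) / 2 + a + 2)) * (g / (g + 1)) ^ b := by rw [e1]
  have hmerge0 : ∀ g : ℝ, 0 < g →
      ((g + 1) ^ (-(p : ℝ) / 2) * priorPi a b g)
        = (g + 1) ^ (-((p : ℝ) / 2 + a + 2)) * (g / (g + 1)) ^ b := by
    intro g hg
    have h1 : (0:ℝ) < g + 1 := by linarith
    unfold priorPi
    have e1 : ((g+1:ℝ) ^ (-(p:ℝ)/2)) * (g+1) ^ (-(a+2)) = (g+1) ^ (-((p : ℝ) / 2 + a + 2)) := by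
      rw [← Real.rpow_add h1, show -(p:ℝ)/2 + -(a+2) = -((p : ℝ) / 2 + a + 2) from by ring]
    calc (g + 1) ^ (-(p : ℝ) / 2) * ((g+1) ^ (-(a+2)) * (g/(g+1)) ^ b)
        = (((g+1:ℝ) ^ (-(p:ℝ)/2)) * (g+1) ^ (-(a+2))) * (g/(g+1)) ^ b := by ring
      _ = (g + 1) ^ (-((p : ℝ) / 2 + a + 2)) * (g / (g + 1)) ^ b := by rw [e1]
  -- nonnegativity of the integrands
  have hF0nn : ∀ g : ℝ, 0 < g → 0 ≤ (((g + 1) ^ (-(p : ℝ) / 2) * priorPi a b g) * Eint ((p : ℝ) / 2 + (n : ℝ) / 2) (s / 2 * (w / (g + 1) + 1)) i) := by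
    intro g hg
    have h1 : (0:ℝ) ≤ (g+1:ℝ) ^ (-(p:ℝ)/2) := Real.rpow_nonneg (by linarith) _
    exact mul_nonneg (mul_nonneg h1 (priorPi_nonneg a b g hg)) (hE0g g)
  have hF1nn : ∀ g : ℝ, 0 < g → 0 ≤ (((g + 1) ^ (-(p : ℝ) / 2) * ((g + 1) ^ γ * priorPi a b g)) * Eint ((p : ℝ) / 2 + (n : ℝ) / 2) (s / 2 * (w / (g + 1) + 1)) i) := by
    intro g hg
    have h1 : (0:ℝ) ≤ (g+1:ℝ) ^ (-(p:ℝ)/2) := Real.rpow_nonneg (by linarith) _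
    have h2 : (0:ℝ) ≤ (g+1:ℝ) ^ γ := Real.rpow_nonneg (by linarith) _
    exact mul_nonneg (mul_nonneg h1 (mul_nonneg h2 (priorPi_nonneg a b g hg))) (hE0g g)
  -- measurability
  have hEEm := measurable_EE ((p : ℝ) / 2 + (n : ℝ) / 2) w s i
  have hpm := measurable_priorPi a b
  have hmeasF1 : Measurable (fun g : ℝ => (((g + 1) ^ (-(p : ℝ) / 2) * ((g + 1) ^ γ * priorPi a b g)) * Eint ((p : ℝ) / 2 + (n : ℝ) / 2) (s / 2 * (w / (g + 1) + 1)) i)) := by fun_prop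
  have hmeasF0 : Measurable (fun g : ℝ => (((g + 1) ^ (-(p : ℝ) / 2) * priorPi a b g) * Eint ((p : ℝ) / 2 + (n : ℝ) / 2) (s / 2 * (w / (g + 1) + 1)) i)) := by fun_prop
  -- integrability
  have hintF1 : IntegrableOn (fun g : ℝ => (((g + 1) ^ (-(p : ℝ) / 2) * ((g + 1) ^ γ * priorPi a b g)) * Eint ((p : ℝ) / 2 + (n : ℝ) / 2) (s / 2 * (w / (g + 1) + 1)) i)) (Ioi 0) := by
    apply Integrable.mono'
      ((intG (γ - ((p : ℝ) / 2 + a + 2)) b (by linarith) hb).const_mul (Eint ((p : ℝ) / 2 + (n : ℝ) / 2) (s / 2) i))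
      hmeasF1.aestronglyMeasurable
    rw [ae_restrict_iff' measurableSet_Ioi]
    filter_upwards with g hg
    have hg0 : (0:ℝ) < g := hg
    rw [Real.norm_eq_abs, abs_of_nonneg (hF1nn g hg0), hmerge1 g hg0]
    have hwnn : (0:ℝ) ≤ (g + 1) ^ (γ - ((p : ℝ) / 2 + a + 2)) * (g / (g + 1)) ^ b :=
      mul_nonneg (Real.rpow_nonneg (by linarith) _)
        (Real.rpow_nonneg (div_nonneg hg0.le (by linarith)) _)
    calc ((g + 1) ^ (γ - ((p : ℝ) / 2 + a + 2)) * (g / (g + 1)) ^ b) * Eint ((p : ℝ) / 2 + (n : ℝ) / 2) (s / 2 * (w / (g + 1) + 1)) i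
        ≤ ((g + 1) ^ (γ - ((p : ℝ) / 2 + a + 2)) * (g / (g + 1)) ^ b) * (Eint ((p : ℝ) / 2 + (n : ℝ) / 2) (s / 2) i) :=
          mul_le_mul_of_nonneg_left (hEub g hg0) hwnn
      _ = (Eint ((p : ℝ) / 2 + (n : ℝ) / 2) (s / 2) i) * ((g + 1) ^ (γ - ((p : ℝ) / 2 + a + 2)) * (g / (g + 1)) ^ b) := mul_comm _ _
  have hintF0 : IntegrableOn (fun g : ℝ => (((g + 1) ^ (-(p : ℝ) / 2) * priorPi a b g) * Eint ((p : ℝ) / 2 + (n : ℝ) / 2) (s / 2 * (w / (g + 1) + 1)) i)) (Ioi 0) := by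
    apply Integrable.mono'
      ((intG (-((p : ℝ) / 2 + a + 2)) b (by linarith) hb).const_mul (Eint ((p : ℝ) / 2 + (n : ℝ) / 2) (s / 2) i))
      hmeasF0.aestronglyMeasurable
    rw [ae_restrict_iff' measurableSet_Ioi]
    filter_upwards with g hg
    have hg0 : (0:ℝ) < g := hg
    rw [Real.norm_eq_abs, abs_of_nonneg (hF0nn g hg0), hmerge0 g hg0]
    have hwnn : (0:ℝ) ≤ (g + 1) ^ (-((p : ℝ) / 2 + a + 2)) * (g / (g + 1)) ^ b :=
      mul_nonneg (Real.rpow_nonneg (by linarith) _)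
        (Real.rpow_nonneg (div_nonneg hg0.le (by linarith)) _)
    calc ((g + 1) ^ (-((p : ℝ) / 2 + a + 2)) * (g / (g + 1)) ^ b) * Eint ((p : ℝ) / 2 + (n : ℝ) / 2) (s / 2 * (w / (g + 1) + 1)) i
        ≤ ((g + 1) ^ (-((p : ℝ) / 2 + a + 2)) * (g / (g + 1)) ^ b) * (Eint ((p : ℝ) / 2 + (n : ℝ) / 2) (s / 2) i) :=
          mul_le_mul_of_nonneg_left (hEub g hg0) hwnn
      _ = (Eint ((p : ℝ) / 2 + (n : ℝ) / 2) (s / 2) i) * ((g + 1) ^ (-((p : ℝ) / 2 + a + 2)) * (g / (g + 1)) ^ b) := mul_comm _ _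
  have hF0ae : 0 ≤ᵐ[volume.restrict (Ioi (0:ℝ))] (fun g : ℝ => (((g + 1) ^ (-(p : ℝ) / 2) * priorPi a b g) * Eint ((p : ℝ) / 2 + (n : ℝ) / 2) (s / 2 * (w / (g + 1) + 1)) i)) := by
    rw [Filter.EventuallyLE, ae_restrict_iff' measurableSet_Ioi]
    filter_upwards with g hg
    exact hF0nn g hg
  have hF0I0 : (0:ℝ) ≤ ∫ g in Ioi (0:ℝ), (((g + 1) ^ (-(p : ℝ) / 2) * priorPi a b g) * Eint ((p : ℝ) / 2 + (n : ℝ) / 2) (s / 2 * (w / (g + 1) + 1)) i) :=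
    setIntegral_nonneg measurableSet_Ioi (fun g hg => hF0nn g hg)
  -- rewrite both sides of the goal
  have hLrw : (∫ g in Ioi (0 : ℝ), ∫ η in Ioi (0 : ℝ),
      Fker p n g η w s * (hfun i η) ^ 2 * (g + 1) ^ γ * priorPi a b g)
      = ∫ g in Ioi (0:ℝ), (((g + 1) ^ (-(p : ℝ) / 2) * ((g + 1) ^ γ * priorPi a b g)) * Eint ((p : ℝ) / 2 + (n : ℝ) / 2) (s / 2 * (w / (g + 1) + 1)) i) := by
    apply setIntegral_congr_fun measurableSet_Ioi
    intro g hg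
    exact inner_eq2 p n i w s ((g + 1) ^ γ) (priorPi a b g) g
  have hRrw : (∫ g in Ioi (0 : ℝ), ∫ η in Ioi (0 : ℝ),
      Fker p n g η w s * (hfun i η) ^ 2 * priorPi a b g)
      = ∫ g in Ioi (0:ℝ), (((g + 1) ^ (-(p : ℝ) / 2) * priorPi a b g) * Eint ((p : ℝ) / 2 + (n : ℝ) / 2) (s / 2 * (w / (g + 1) + 1)) i) := by
    apply setIntegral_congr_fun measurableSet_Ioi
    intro g hg
    exact inner_eq1 p n i w s (priorPi a b g) g
  rw [hLrw, hRrw]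
  -- split the left integral
  have hsplit : (∫ g in Ioi (0:ℝ), (((g + 1) ^ (-(p : ℝ) / 2) * ((g + 1) ^ γ * priorPi a b g)) * Eint ((p : ℝ) / 2 + (n : ℝ) / 2) (s / 2 * (w / (g + 1) + 1)) i))
      = (∫ g in Ioc (0:ℝ) (2 * w + 1), (((g + 1) ^ (-(p : ℝ) / 2) * ((g + 1) ^ γ * priorPi a b g)) * Eint ((p : ℝ) / 2 + (n : ℝ) / 2) (s / 2 * (w / (g + 1) + 1)) i))
        + ∫ g in Ioi (2 * w + 1), (((g + 1) ^ (-(p : ℝ) / 2) * ((g + 1) ^ γ * priorPi a b g)) * Eint ((p : ℝ) / 2 + (n : ℝ) / 2) (s / 2 * (w / (g + 1) + 1)) i) := by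
    rw [← setIntegral_union (Ioc_disjoint_Ioi le_rfl) measurableSet_Ioi
      (hintF1.mono_set hsub1) (hintF1.mono_set hsub2),
      Ioc_union_Ioi_eq_Ioi (by linarith : (0:ℝ) ≤ 2 * w + 1)]
  -- part 1 : the bounded region
  have hpart1 : (∫ g in Ioc (0:ℝ) (2 * w + 1), (((g + 1) ^ (-(p : ℝ) / 2) * ((g + 1) ^ γ * priorPi a b g)) * Eint ((p : ℝ) / 2 + (n : ℝ) / 2) (s / 2 * (w / (g + 1) + 1)) i))
      ≤ (2 ^ γ * (w + 1) ^ γ) * ∫ g in Ioi (0:ℝ), (((g + 1) ^ (-(p : ℝ) / 2) * priorPi a b g) * Eint ((p : ℝ) / 2 + (n : ℝ) / 2) (s / 2 * (w / (g + 1) + 1)) i) := by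
    have step1 : (∫ g in Ioc (0:ℝ) (2 * w + 1), (((g + 1) ^ (-(p : ℝ) / 2) * ((g + 1) ^ γ * priorPi a b g)) * Eint ((p : ℝ) / 2 + (n : ℝ) / 2) (s / 2 * (w / (g + 1) + 1)) i))
        ≤ ∫ g in Ioc (0:ℝ) (2 * w + 1), (2 ^ γ * (w + 1) ^ γ) * (((g + 1) ^ (-(p : ℝ) / 2) * priorPi a b g) * Eint ((p : ℝ) / 2 + (n : ℝ) / 2) (s / 2 * (w / (g + 1) + 1)) i) := by
      apply setIntegral_mono_on (hintF1.mono_set hsub1)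
        ((hintF0.mono_set hsub1).const_mul _) measurableSet_Ioc
      intro g hg
      obtain ⟨hg0, hgR⟩ := hg
      have hgam : (g + 1 : ℝ) ^ γ ≤ 2 ^ γ * (w + 1) ^ γ := by
        have h1 : (g + 1 : ℝ) ^ γ ≤ (2 * (w + 1)) ^ γ :=
          Real.rpow_le_rpow (by linarith) (by linarith) hγ0
        rwa [Real.mul_rpow (by norm_num) (by linarith)] at h1
      calc (((g + 1) ^ (-(p : ℝ) / 2) * ((g + 1) ^ γ * priorPi a b g)) * Eint ((p : ℝ) / 2 + (n : ℝ) / 2) (s / 2 * (w / (g + 1) + 1)) i) = (g + 1) ^ γ * (((g + 1) ^ (-(p : ℝ) / 2) * priorPi a b g) * Eint ((p : ℝ) / 2 + (n : ℝ) / 2) (s / 2 * (w / (g + 1) + 1)) i) := by ring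
        _ ≤ (2 ^ γ * (w + 1) ^ γ) * (((g + 1) ^ (-(p : ℝ) / 2) * priorPi a b g) * Eint ((p : ℝ) / 2 + (n : ℝ) / 2) (s / 2 * (w / (g + 1) + 1)) i) :=
            mul_le_mul_of_nonneg_right hgam (hF0nn g hg0)
    calc (∫ g in Ioc (0:ℝ) (2 * w + 1), (((g + 1) ^ (-(p : ℝ) / 2) * ((g + 1) ^ γ * priorPi a b g)) * Eint ((p : ℝ) / 2 + (n : ℝ) / 2) (s / 2 * (w / (g + 1) + 1)) i))
        ≤ ∫ g in Ioc (0:ℝ) (2 * w + 1), (2 ^ γ * (w + 1) ^ γ) * (((g + 1) ^ (-(p : ℝ) / 2) * priorPi a b g) * Eint ((p : ℝ) / 2 + (n : ℝ) / 2) (s / 2 * (w / (g + 1) + 1)) i) := step1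
      _ = (2 ^ γ * (w + 1) ^ γ) * ∫ g in Ioc (0:ℝ) (2 * w + 1), (((g + 1) ^ (-(p : ℝ) / 2) * priorPi a b g) * Eint ((p : ℝ) / 2 + (n : ℝ) / 2) (s / 2 * (w / (g + 1) + 1)) i) :=
          integral_const_mul _ _
      _ ≤ (2 ^ γ * (w + 1) ^ γ) * ∫ g in Ioi (0:ℝ), (((g + 1) ^ (-(p : ℝ) / 2) * priorPi a b g) * Eint ((p : ℝ) / 2 + (n : ℝ) / 2) (s / 2 * (w / (g + 1) + 1)) i) := by
          apply mul_le_mul_of_nonneg_left ?_ (by positivity)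
          exact setIntegral_mono_set hintF0 hF0ae hsub1.eventuallyLE
  -- part 2 : the tail region
  have hIN := integral_Ioi_rpow_of_lt (show γ - ((p : ℝ) / 2 + a + 2) < -1 by linarith) hR0
  have hID := integral_Ioi_rpow_of_lt (show -((p : ℝ) / 2 + a + 2) < -1 by linarith) hR0
  have hup : (∫ g in Ioi (2 * w + 1), (((g + 1) ^ (-(p : ℝ) / 2) * ((g + 1) ^ γ * priorPi a b g)) * Eint ((p : ℝ) / 2 + (n : ℝ) / 2) (s / 2 * (w / (g + 1) + 1)) i))
      ≤ (((2:ℝ) ^ |b|) * (Eint ((p : ℝ) / 2 + (n : ℝ) / 2) (s / 2) i)) * (-((2 * w + 1) ^ (γ - ((p : ℝ) / 2 + a + 2) + 1)) / (γ - ((p : ℝ) / 2 + a + 2) + 1)) := by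
    have step : (∫ g in Ioi (2 * w + 1), (((g + 1) ^ (-(p : ℝ) / 2) * ((g + 1) ^ γ * priorPi a b g)) * Eint ((p : ℝ) / 2 + (n : ℝ) / 2) (s / 2 * (w / (g + 1) + 1)) i))
        ≤ ∫ g in Ioi (2 * w + 1), (((2:ℝ) ^ |b|) * (Eint ((p : ℝ) / 2 + (n : ℝ) / 2) (s / 2) i)) * g ^ (γ - ((p : ℝ) / 2 + a + 2)) := by
      apply setIntegral_mono_on (hintF1.mono_set hsub2)
        ((integrableOn_Ioi_rpow_of_lt (by linarith) hR0).const_mul _) measurableSet_Ioi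
      intro g hg
      have hg1 : (1:ℝ) ≤ g := by
        have : (2 * w + 1 : ℝ) < g := hg
        linarith
      have hg0 : (0:ℝ) < g := by linarith
      have hb1 : (g + 1 : ℝ) ^ (γ - ((p : ℝ) / 2 + a + 2)) ≤ g ^ (γ - ((p : ℝ) / 2 + a + 2)) :=
        Real.rpow_le_rpow_of_nonpos hg0 (by linarith) (by linarith)
      have hb2 : (g / (g + 1)) ^ b ≤ ((2:ℝ) ^ |b|) := ratio_le b g hg1
      have hb3 : Eint ((p : ℝ) / 2 + (n : ℝ) / 2) (s / 2 * (w / (g + 1) + 1)) i ≤ (Eint ((p : ℝ) / 2 + (n : ℝ) / 2) (s / 2) i) := hEub g hg0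
      have hrnn : (0:ℝ) ≤ (g / (g + 1)) ^ b :=
        Real.rpow_nonneg (div_nonneg hg0.le (by linarith)) _
      have hgnn : (0:ℝ) ≤ g ^ (γ - ((p : ℝ) / 2 + a + 2)) := Real.rpow_nonneg hg0.le _
      have hwe : ((g + 1 : ℝ) ^ (γ - ((p : ℝ) / 2 + a + 2)) * (g / (g + 1)) ^ b)
          ≤ g ^ (γ - ((p : ℝ) / 2 + a + 2)) * ((2:ℝ) ^ |b|) :=
        mul_le_mul hb1 hb2 hrnn hgnn
      calc (((g + 1) ^ (-(p : ℝ) / 2) * ((g + 1) ^ γ * priorPi a b g)) * Eint ((p : ℝ) / 2 + (n : ℝ) / 2) (s / 2 * (w / (g + 1) + 1)) i)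
          = ((g + 1) ^ (γ - ((p : ℝ) / 2 + a + 2)) * (g / (g + 1)) ^ b) * Eint ((p : ℝ) / 2 + (n : ℝ) / 2) (s / 2 * (w / (g + 1) + 1)) i := by
            rw [hmerge1 g hg0]
        _ ≤ (g ^ (γ - ((p : ℝ) / 2 + a + 2)) * ((2:ℝ) ^ |b|)) * (Eint ((p : ℝ) / 2 + (n : ℝ) / 2) (s / 2) i) := by
            apply mul_le_mul hwe hb3 (hE0g g)
            exact mul_nonneg hgnn hcU0.le
        _ = (((2:ℝ) ^ |b|) * (Eint ((p : ℝ) / 2 + (n : ℝ) / 2) (s / 2) i)) * g ^ (γ - ((p : ℝ) / 2 + a + 2)) := by ring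
    calc (∫ g in Ioi (2 * w + 1), (((g + 1) ^ (-(p : ℝ) / 2) * ((g + 1) ^ γ * priorPi a b g)) * Eint ((p : ℝ) / 2 + (n : ℝ) / 2) (s / 2 * (w / (g + 1) + 1)) i))
        ≤ ∫ g in Ioi (2 * w + 1), (((2:ℝ) ^ |b|) * (Eint ((p : ℝ) / 2 + (n : ℝ) / 2) (s / 2) i)) * g ^ (γ - ((p : ℝ) / 2 + a + 2)) := step
      _ = (((2:ℝ) ^ |b|) * (Eint ((p : ℝ) / 2 + (n : ℝ) / 2) (s / 2) i)) * ∫ g in Ioi (2 * w + 1), g ^ (γ - ((p : ℝ) / 2 + a + 2)) := integral_const_mul _ _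
      _ = (((2:ℝ) ^ |b|) * (Eint ((p : ℝ) / 2 + (n : ℝ) / 2) (s / 2) i)) * (-((2 * w + 1) ^ (γ - ((p : ℝ) / 2 + a + 2) + 1)) / (γ - ((p : ℝ) / 2 + a + 2) + 1)) := by rw [hIN]
  have hlow : (((2:ℝ) ^ (-|b|) * (2:ℝ) ^ (-((p : ℝ) / 2 + a + 2))) * (Eint ((p : ℝ) / 2 + (n : ℝ) / 2) s i)) * (-((2 * w + 1) ^ (-((p : ℝ) / 2 + a + 2) + 1)) / (-((p : ℝ) / 2 + a + 2) + 1)) ≤ ∫ g in Ioi (0:ℝ), (((g + 1) ^ (-(p : ℝ) / 2) * priorPi a b g) * Eint ((p : ℝ) / 2 + (n : ℝ) / 2) (s / 2 * (w / (g + 1) + 1)) i) := by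
    have step : (∫ g in Ioi (2 * w + 1), (((2:ℝ) ^ (-|b|) * (2:ℝ) ^ (-((p : ℝ) / 2 + a + 2))) * (Eint ((p : ℝ) / 2 + (n : ℝ) / 2) s i)) * g ^ (-((p : ℝ) / 2 + a + 2)))
        ≤ ∫ g in Ioi (2 * w + 1), (((g + 1) ^ (-(p : ℝ) / 2) * priorPi a b g) * Eint ((p : ℝ) / 2 + (n : ℝ) / 2) (s / 2 * (w / (g + 1) + 1)) i) := by
      apply setIntegral_mono_on
        ((integrableOn_Ioi_rpow_of_lt (by linarith) hR0).const_mul _)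
        (hintF0.mono_set hsub2) measurableSet_Ioi
      intro g hg
      have hgR : (2 * w + 1 : ℝ) < g := hg
      have hg1 : (1:ℝ) ≤ g := by linarith
      have hg0 : (0:ℝ) < g := by linarith
      have hb1 : ((2 * g : ℝ)) ^ (-((p : ℝ) / 2 + a + 2)) ≤ (g + 1) ^ (-((p : ℝ) / 2 + a + 2)) :=
        Real.rpow_le_rpow_of_nonpos (by linarith) (by linarith) (by linarith)
      have hb1' : ((2:ℝ) ^ (-((p : ℝ) / 2 + a + 2)) * g ^ (-((p : ℝ) / 2 + a + 2))) ≤ (g + 1) ^ (-((p : ℝ) / 2 + a + 2)) := by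
        rwa [Real.mul_rpow (by norm_num) hg0.le] at hb1
      have hb2 : (2:ℝ) ^ (-|b|) ≤ (g / (g + 1)) ^ b := ratio_ge b g hg1
      have hb3 : (Eint ((p : ℝ) / 2 + (n : ℝ) / 2) s i) ≤ Eint ((p : ℝ) / 2 + (n : ℝ) / 2) (s / 2 * (w / (g + 1) + 1)) i := hElb g hgR
      have hgnn : (0:ℝ) ≤ g ^ (-((p : ℝ) / 2 + a + 2)) := Real.rpow_nonneg hg0.le _
      have h2nn : (0:ℝ) ≤ (2:ℝ) ^ (-((p : ℝ) / 2 + a + 2)) := Real.rpow_nonneg (by norm_num) _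
      have h2bnn : (0:ℝ) ≤ (2:ℝ) ^ (-|b|) := Real.rpow_nonneg (by norm_num) _
      have hwe : (2:ℝ) ^ (-|b|) * ((2:ℝ) ^ (-((p : ℝ) / 2 + a + 2)) * g ^ (-((p : ℝ) / 2 + a + 2)))
          ≤ (g / (g + 1)) ^ b * (g + 1) ^ (-((p : ℝ) / 2 + a + 2)) :=
        mul_le_mul hb2 hb1' (by positivity) (le_trans h2bnn hb2)
      calc (((2:ℝ) ^ (-|b|) * (2:ℝ) ^ (-((p : ℝ) / 2 + a + 2))) * (Eint ((p : ℝ) / 2 + (n : ℝ) / 2) s i)) * g ^ (-((p : ℝ) / 2 + a + 2))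
          = ((2:ℝ) ^ (-|b|) * ((2:ℝ) ^ (-((p : ℝ) / 2 + a + 2)) * g ^ (-((p : ℝ) / 2 + a + 2)))) * (Eint ((p : ℝ) / 2 + (n : ℝ) / 2) s i) := by ring
        _ ≤ ((g / (g + 1)) ^ b * (g + 1) ^ (-((p : ℝ) / 2 + a + 2))) * Eint ((p : ℝ) / 2 + (n : ℝ) / 2) (s / 2 * (w / (g + 1) + 1)) i := by
            apply mul_le_mul hwe hb3 hE10
            positivity
        _ = (((g + 1) ^ (-(p : ℝ) / 2) * priorPi a b g) * Eint ((p : ℝ) / 2 + (n : ℝ) / 2) (s / 2 * (w / (g + 1) + 1)) i) := by rw [hmerge0 g hg0]; ring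
    have step2 : (∫ g in Ioi (2 * w + 1), (((g + 1) ^ (-(p : ℝ) / 2) * priorPi a b g) * Eint ((p : ℝ) / 2 + (n : ℝ) / 2) (s / 2 * (w / (g + 1) + 1)) i)) ≤ ∫ g in Ioi (0:ℝ), (((g + 1) ^ (-(p : ℝ) / 2) * priorPi a b g) * Eint ((p : ℝ) / 2 + (n : ℝ) / 2) (s / 2 * (w / (g + 1) + 1)) i) :=
      setIntegral_mono_set hintF0 hF0ae hsub2.eventuallyLE
    calc (((2:ℝ) ^ (-|b|) * (2:ℝ) ^ (-((p : ℝ) / 2 + a + 2))) * (Eint ((p : ℝ) / 2 + (n : ℝ) / 2) s i)) * (-((2 * w + 1) ^ (-((p : ℝ) / 2 + a + 2) + 1)) / (-((p : ℝ) / 2 + a + 2) + 1))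
        = ∫ g in Ioi (2 * w + 1), (((2:ℝ) ^ (-|b|) * (2:ℝ) ^ (-((p : ℝ) / 2 + a + 2))) * (Eint ((p : ℝ) / 2 + (n : ℝ) / 2) s i)) * g ^ (-((p : ℝ) / 2 + a + 2)) := by
          rw [integral_const_mul, hID]
      _ ≤ ∫ g in Ioi (2 * w + 1), (((g + 1) ^ (-(p : ℝ) / 2) * priorPi a b g) * Eint ((p : ℝ) / 2 + (n : ℝ) / 2) (s / 2 * (w / (g + 1) + 1)) i) := step
      _ ≤ ∫ g in Ioi (0:ℝ), (((g + 1) ^ (-(p : ℝ) / 2) * priorPi a b g) * Eint ((p : ℝ) / 2 + (n : ℝ) / 2) (s / 2 * (w / (g + 1) + 1)) i) := step2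
  -- the final algebraic comparison on the tail
  have hA1eq : ((2 * w + 1) ^ (γ - ((p : ℝ) / 2 + a + 2) + 1)) = (2 * w + 1) ^ γ * ((2 * w + 1) ^ (-((p : ℝ) / 2 + a + 2) + 1)) := by
    rw [show γ - ((p : ℝ) / 2 + a + 2) + 1 = γ + (-((p : ℝ) / 2 + a + 2) + 1) from by ring, Real.rpow_add hR0]
  have hRγ : (2 * w + 1 : ℝ) ^ γ ≤ 2 ^ γ * (w + 1) ^ γ := by
    have h1 : (2 * w + 1 : ℝ) ^ γ ≤ (2 * (w + 1)) ^ γ :=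
      Real.rpow_le_rpow (by linarith) (by linarith) hγ0
    rwa [Real.mul_rpow (by norm_num) (by linarith)] at h1
  have he1 : -((2 * w + 1) ^ (γ - ((p : ℝ) / 2 + a + 2) + 1)) / (γ - ((p : ℝ) / 2 + a + 2) + 1) = ((2 * w + 1) ^ (γ - ((p : ℝ) / 2 + a + 2) + 1)) / (((p : ℝ) / 2 + a + 2) - γ - 1) := by
    rw [show (γ - ((p : ℝ) / 2 + a + 2) + 1) = -(((p : ℝ) / 2 + a + 2) - γ - 1) from by ring, div_neg, neg_div, neg_neg]
  have he2 : -((2 * w + 1) ^ (-((p : ℝ) / 2 + a + 2) + 1)) / (-((p : ℝ) / 2 + a + 2) + 1) = ((2 * w + 1) ^ (-((p : ℝ) / 2 + a + 2) + 1)) / (((p : ℝ) / 2 + a + 2) - 1) := by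
    rw [show (-((p : ℝ) / 2 + a + 2) + 1) = -(((p : ℝ) / 2 + a + 2) - 1) from by ring, div_neg, neg_div, neg_neg]
  have hA00 : (0:ℝ) ≤ ((2 * w + 1) ^ (-((p : ℝ) / 2 + a + 2) + 1)) := Real.rpow_nonneg hR0.le _
  have hfin : (((2:ℝ) ^ |b|) * (Eint ((p : ℝ) / 2 + (n : ℝ) / 2) (s / 2) i)) * (-((2 * w + 1) ^ (γ - ((p : ℝ) / 2 + a + 2) + 1)) / (γ - ((p : ℝ) / 2 + a + 2) + 1))
      ≤ ((2 ^ (((p : ℝ) / 2 + (n : ℝ) / 2) + 1) * (1 + Real.log 2) ^ 2) * ((2:ℝ) ^ |b|) * 2 ^ γ * (((p : ℝ) / 2 + a + 2) - 1) / (((p : ℝ) / 2 + a + 2) - γ - 1) / ((2:ℝ) ^ (-|b|) * (2:ℝ) ^ (-((p : ℝ) / 2 + a + 2)))) * (w + 1) ^ γ * ((((2:ℝ) ^ (-|b|) * (2:ℝ) ^ (-((p : ℝ) / 2 + a + 2))) * (Eint ((p : ℝ) / 2 + (n : ℝ) / 2) s i)) * (-((2 * w + 1) ^ (-((p : ℝ)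 / 2 + a + 2) + 1)) / (-((p : ℝ) / 2 + a + 2) + 1))) := by
    rw [he1, he2]
    have t1 : ((2:ℝ) ^ |b|) * (Eint ((p : ℝ) / 2 + (n : ℝ) / 2) (s / 2) i) * ((2 * w + 1) ^ γ)
        ≤ ((2:ℝ) ^ |b|) * ((2 ^ (((p : ℝ) / 2 + (n : ℝ) / 2) + 1) * (1 + Real.log 2) ^ 2) * (Eint ((p : ℝ) / 2 + (n : ℝ) / 2) s i)) * (2 ^ γ * (w + 1) ^ γ) := by
      have h := mul_le_mul hE2K hRγ (Real.rpow_nonneg hR0.le _)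
        (mul_nonneg hK0.le hE10)
      calc ((2:ℝ) ^ |b|) * (Eint ((p : ℝ) / 2 + (n : ℝ) / 2) (s / 2) i) * ((2 * w + 1) ^ γ)
          = ((2:ℝ) ^ |b|) * ((Eint ((p : ℝ) / 2 + (n : ℝ) / 2) (s / 2) i) * ((2 * w + 1) ^ γ)) := by ring
        _ ≤ ((2:ℝ) ^ |b|) * (((2 ^ (((p : ℝ) / 2 + (n : ℝ) / 2) + 1) * (1 + Real.log 2) ^ 2) * (Eint ((p : ℝ) / 2 + (n : ℝ) / 2) s i)) * (2 ^ γ * (w + 1) ^ γ)) :=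
            mul_le_mul_of_nonneg_left h hcU0.le
        _ = ((2:ℝ) ^ |b|) * ((2 ^ (((p : ℝ) / 2 + (n : ℝ) / 2) + 1) * (1 + Real.log 2) ^ 2) * (Eint ((p : ℝ) / 2 + (n : ℝ) / 2) s i)) * (2 ^ γ * (w + 1) ^ γ) := by ring
    have t2 : ((2:ℝ) ^ |b|) * (Eint ((p : ℝ) / 2 + (n : ℝ) / 2) (s / 2) i) * ((2 * w + 1) ^ γ) * ((2 * w + 1) ^ (-((p : ℝ) / 2 + a + 2) + 1))
        ≤ ((2:ℝ) ^ |b|) * ((2 ^ (((p : ℝ) / 2 + (n : ℝ) / 2) + 1) * (1 + Real.log 2) ^ 2) * (Eint ((p : ℝ) / 2 + (n : ℝ) / 2) s i)) * (2 ^ γ * (w + 1) ^ γ) * ((2 * w + 1) ^ (-((p : ℝ) / 2 + a + 2) + 1)) :=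
      mul_le_mul_of_nonneg_right t1 hA00
    have hmid : ((2:ℝ) ^ |b|) * ((2 ^ (((p : ℝ) / 2 + (n : ℝ) / 2) + 1) * (1 + Real.log 2) ^ 2) * (Eint ((p : ℝ) / 2 + (n : ℝ) / 2) s i)) * (2 ^ γ * (w + 1) ^ γ) * ((2 * w + 1) ^ (-((p : ℝ) / 2 + a + 2) + 1)) / (((p : ℝ) / 2 + a + 2) - γ - 1)
        = ((2 ^ (((p : ℝ) / 2 + (n : ℝ) / 2) + 1) * (1 + Real.log 2) ^ 2) * ((2:ℝ) ^ |b|) * 2 ^ γ * (((p : ℝ) / 2 + a + 2) - 1) / (((p : ℝ) / 2 + a + 2) - γ - 1) / ((2:ℝ) ^ (-|b|) * (2:ℝ) ^ (-((p : ℝ) / 2 + a + 2)))) * (w + 1) ^ γ * ((((2:ℝ) ^ (-|b|) * (2:ℝ) ^ (-((p : ℝ) / 2 + a + 2))) * (Eint ((p : ℝ) / 2 + (n : ℝ) / 2) s i)) * (((2 * w + 1) ^ (-((p : ℝ) / 2 + a + 2) + 1)) / (((p : ℝ) / 2 + a + 2) - 1))) := by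
      exact key_alg _ _ _ _ _ _ _ _ _ (ne_of_gt (by linarith))
        (ne_of_gt (by linarith)) hcL0.ne'
    calc (((2:ℝ) ^ |b|) * (Eint ((p : ℝ) / 2 + (n : ℝ) / 2) (s / 2) i)) * (((2 * w + 1) ^ (γ - ((p : ℝ) / 2 + a + 2) + 1)) / (((p : ℝ) / 2 + a + 2) - γ - 1))
        = ((2:ℝ) ^ |b|) * (Eint ((p : ℝ) / 2 + (n : ℝ) / 2) (s / 2) i) * ((2 * w + 1) ^ γ) * ((2 * w + 1) ^ (-((p : ℝ) / 2 + a + 2) + 1)) / (((p : ℝ) / 2 + a + 2) - γ - 1) := by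
          rw [hA1eq]; ring
      _ ≤ ((2:ℝ) ^ |b|) * ((2 ^ (((p : ℝ) / 2 + (n : ℝ) / 2) + 1) * (1 + Real.log 2) ^ 2) * (Eint ((p : ℝ) / 2 + (n : ℝ) / 2) s i)) * (2 ^ γ * (w + 1) ^ γ) * ((2 * w + 1) ^ (-((p : ℝ) / 2 + a + 2) + 1)) / (((p : ℝ) / 2 + a + 2) - γ - 1) := by
          exact (div_le_div_iff_of_pos_right (by linarith)).mpr t2
      _ = ((2 ^ (((p : ℝ) / 2 + (n : ℝ) / 2) + 1) * (1 + Real.log 2) ^ 2) * ((2:ℝ) ^ |b|) * 2 ^ γ * (((p : ℝ) / 2 + a + 2) - 1) / (((p : ℝ) / 2 + a + 2) - γ - 1) / ((2:ℝ) ^ (-|b|) * (2:ℝ) ^ (-((p : ℝ) / 2 + a + 2)))) * (w + 1) ^ γ * ((((2:ℝ) ^ (-|b|) * (2:ℝ) ^ (-((p : ℝ) / 2 + a + 2))) * (Eint ((p : ℝ) / 2 + (n : ℝ) / 2) s i)) * (((2 * w + 1) ^ (-((p : ℝ) / 2 + a + 2) + 1)) / (((p : ℝ) / 2 + a + 2)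 - 1))) := hmid
  have hpart2 : (∫ g in Ioi (2 * w + 1), (((g + 1) ^ (-(p : ℝ) / 2) * ((g + 1) ^ γ * priorPi a b g)) * Eint ((p : ℝ) / 2 + (n : ℝ) / 2) (s / 2 * (w / (g + 1) + 1)) i))
      ≤ ((2 ^ (((p : ℝ) / 2 + (n : ℝ) / 2) + 1) * (1 + Real.log 2) ^ 2) * ((2:ℝ) ^ |b|) * 2 ^ γ * (((p : ℝ) / 2 + a + 2) - 1) / (((p : ℝ) / 2 + a + 2) - γ - 1) / ((2:ℝ) ^ (-|b|) * (2:ℝ) ^ (-((p : ℝ) / 2 + a + 2)))) * (w + 1) ^ γ * ∫ g in Ioi (0:ℝ), (((g + 1) ^ (-(p : ℝ) / 2) * priorPi a b g) * Eint ((p : ℝ) / 2 + (n : ℝ) / 2) (s / 2 * (w / (g + 1) + 1)) i) := by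
    refine hup.trans (hfin.trans ?_)
    apply mul_le_mul_of_nonneg_left hlow
    positivity
  calc (∫ g in Ioi (0:ℝ), (((g + 1) ^ (-(p : ℝ) / 2) * ((g + 1) ^ γ * priorPi a b g)) * Eint ((p : ℝ) / 2 + (n : ℝ) / 2) (s / 2 * (w / (g + 1) + 1)) i))
      = (∫ g in Ioc (0:ℝ) (2 * w + 1), (((g + 1) ^ (-(p : ℝ) / 2) * ((g + 1) ^ γ * priorPi a b g)) * Eint ((p : ℝ) / 2 + (n : ℝ) / 2) (s / 2 * (w / (g + 1) + 1)) i))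
        + ∫ g in Ioi (2 * w + 1), (((g + 1) ^ (-(p : ℝ) / 2) * ((g + 1) ^ γ * priorPi a b g)) * Eint ((p : ℝ) / 2 + (n : ℝ) / 2) (s / 2 * (w / (g + 1) + 1)) i) := hsplit
    _ ≤ (2 ^ γ * (w + 1) ^ γ) * (∫ g in Ioi (0:ℝ), (((g + 1) ^ (-(p : ℝ) / 2) * priorPi a b g) * Eint ((p : ℝ) / 2 + (n : ℝ) / 2) (s / 2 * (w / (g + 1) + 1)) i))
        + ((2 ^ (((p : ℝ) / 2 + (n : ℝ) / 2) + 1) * (1 + Real.log 2) ^ 2) * ((2:ℝ) ^ |b|) * 2 ^ γ * (((p : ℝ) / 2 + a + 2) - 1) / (((p : ℝ) / 2 + a + 2) - γ - 1) / ((2:ℝ) ^ (-|b|) * (2:ℝ) ^ (-((p : ℝ) / 2 + a + 2)))) * (w + 1) ^ γ * ∫ g in Ioi (0:ℝ), (((g + 1) ^ (-(p : ℝ) / 2) * priorPi a b g) * Eint ((p : ℝ) / 2 + (n : ℝ) / 2) (s / 2 * (w / (g + 1) + 1)) i) := add_le_add hpart1 hpart2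
    _ = (2 ^ γ + ((2 ^ (((p : ℝ) / 2 + (n : ℝ) / 2) + 1) * (1 + Real.log 2) ^ 2) * ((2:ℝ) ^ |b|) * 2 ^ γ * (((p : ℝ) / 2 + a + 2) - 1) / (((p : ℝ) / 2 + a + 2) - γ - 1) / ((2:ℝ) ^ (-|b|) * (2:ℝ) ^ (-((p : ℝ) / 2 + a + 2))))) * (w + 1) ^ γ * ∫ g in Ioi (0:ℝ), (((g + 1) ^ (-(p : ℝ) / 2) * priorPi a b g) * Eint ((p : ℝ) / 2 + (n : ℝ) / 2) (s / 2 * (w / (g + 1) + 1)) i) := by ring
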